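/- Let η^mono: ℝ^N → ℝ^N be the Euclidean projection onto the cone M_N = {x ∈ ℝ^N : x_t ≤ x_{t+1} for all 1 ≤ t ≤ N−1}, R_N(μ) = E ‖η^mono(μ + Z) − μ‖₂² with Z ∼ N(0, I_N), and r(ℓ) = E ‖η^mono(W)‖₂² for W ∼ N(0, I_ℓ) (the risk at zero in dimension ℓ). For μ ∈ M_N, let I₊(μ) = {i ∈ {1,…,N−1} : μ_i < μ_{i+1}} = {i₁ < i₂ < ⋯ < i_{K(μ)}} be its increase points and set J_k = {i_k + 1, …, i_{k+1}} for k = 0, 1, …, K(μ), with the conventions i₀ = 0 and i_{K(μ)+1} = N. Then lim_{t→∞} R_N(tμ) = Σ_{k=0}^{K(μ)} r(|J_k|). -/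

import Mathlib

open MeasureTheory ProbabilityTheory ENNReal Filter

noncomputable section

/-- The standard Gaussian measure `N(0, I_N)` on `ℝ^N`. -/
def stdGaussian (N : ℕ) : Measure (Fin N → ℝ) :=
  Measure.pi fun _ => gaussianReal 0 1

/-- The cone `M_N` of nondecreasing sequences in `ℝ^N`. -/
def monoCone (N : ℕ) : Set (Fin N → ℝ) := {x | Monotone x}

section
variable (η : ∀ ℓ : ℕ, (Fin ℓ → ℝ) → (Fin ℓ → ℝ))

/-- The risk at zero of monotone regression in dimension `ℓ`,
`r(ℓ) = E ‖η^mono(W)‖₂²`, `W ∼ N(0, I_ℓ)`. -/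
def riskAtZero (ℓ : ℕ) : ℝ≥0∞ :=
  ∫⁻ w, ENNReal.ofReal (∑ i, (η ℓ w i) ^ 2) ∂(stdGaussian ℓ)

end

namespace MonoRegAux

open scoped NNReal Real

lemma sum_sq_add_le (n : ℕ) (a b : Fin n → ℝ) :
    ∑ i, (a i + b i) ^ 2 ≤ 2 * ∑ i, (a i) ^ 2 + 2 * ∑ i, (b i) ^ 2 := by
  rw [Finset.mul_sum, Finset.mul_sum, ← Finset.sum_add_distrib]
  exact Finset.sum_le_sum fun i _ => by nlinarith [sq_nonneg (a i - b i)]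

lemma monoCone_lineSeg {n : ℕ} {p x : Fin n → ℝ} (hp : p ∈ monoCone n) (hx : x ∈ monoCone n)
    {θ : ℝ} (h0 : 0 ≤ θ) (h1 : θ ≤ 1) : (fun i => p i + θ * (x i - p i)) ∈ monoCone n := by
  intro i j hij
  have h2 := hp hij
  have h3 := hx hij
  have h4 : (0:ℝ) ≤ 1 - θ := by linarith
  dsimp only
  nlinarith [mul_le_mul_of_nonneg_left h2 h4, mul_le_mul_of_nonneg_left h3 h0]

lemma ip_nonpos_of_min {n : ℕ} {y p : Fin n → ℝ} (hpM : p ∈ monoCone n)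
    (hmin : ∀ x ∈ monoCone n, ∑ i, (y i - p i) ^ 2 ≤ ∑ i, (y i - x i) ^ 2) :
    ∀ x ∈ monoCone n, ∑ i, (y i - p i) * (x i - p i) ≤ 0 := by
  intro x hx
  set Q := ∑ i, (x i - p i) ^ 2 with hQ
  set A := ∑ i, (y i - p i) * (x i - p i) with hA
  have hQ0 : 0 ≤ Q := Finset.sum_nonneg fun i _ => sq_nonneg _
  have key : ∀ θ : ℝ, 0 ≤ θ → θ ≤ 1 → 2 * θ * A ≤ θ ^ 2 * Q := by
    intro θ h0 h1
    have h := hmin _ (monoCone_lineSeg hpM hx h0 h1)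
    have expand : ∑ i, (y i - (p i + θ * (x i - p i))) ^ 2
        = ∑ i, (y i - p i) ^ 2 - 2 * θ * A + θ ^ 2 * Q := by
      rw [hQ, hA, Finset.mul_sum, Finset.mul_sum, ← Finset.sum_sub_distrib,
        ← Finset.sum_add_distrib]
      exact Finset.sum_congr rfl fun i _ => by ring
    rw [expand] at h
    linarith
  by_contra hcon
  push_neg at hcon
  set θ := min 1 (A / (Q + 1)) with hθdef
  have hQ1 : (0:ℝ) < Q + 1 := by linarith
  have h0 : 0 < θ := lt_min one_pos (div_pos hcon hQ1)
  have h1 : θ ≤ 1 := min_le_left _ _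
  have hm : θ ≤ A / (Q + 1) := min_le_right _ _
  have hm' : θ * (Q + 1) ≤ A := (le_div_iff₀ hQ1).mp hm
  have hk := key θ h0.le h1
  nlinarith

lemma min_of_ip_nonpos {n : ℕ} {y p : Fin n → ℝ}
    (h : ∀ x ∈ monoCone n, ∑ i, (y i - p i) * (x i - p i) ≤ 0) :
    ∀ x ∈ monoCone n, ∑ i, (y i - p i) ^ 2 ≤ ∑ i, (y i - x i) ^ 2 := by
  intro x hx
  have hid : ∑ i, (y i - x i) ^ 2
      = ∑ i, (y i - p i) ^ 2 + (∑ i, (x i - p i) ^ 2 - 2 * ∑ i, (y i - p i) * (x i - p i)) := by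
    rw [Finset.mul_sum, ← Finset.sum_sub_distrib, ← Finset.sum_add_distrib]
    exact Finset.sum_congr rfl fun i _ => by ring
  have h1 := h x hx
  have h2 : (0:ℝ) ≤ ∑ i, (x i - p i) ^ 2 := Finset.sum_nonneg fun i _ => sq_nonneg _
  linarith

lemma proj_unique {n : ℕ} {y p q : Fin n → ℝ} (hp : p ∈ monoCone n) (hq : q ∈ monoCone n)
    (hminp : ∀ x ∈ monoCone n, ∑ i, (y i - p i) ^ 2 ≤ ∑ i, (y i - x i) ^ 2)
    (hminq : ∀ x ∈ monoCone n, ∑ i, (y i - q i) ^ 2 ≤ ∑ i, (y i - x i) ^ 2) : p = q := by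
  have h1 := ip_nonpos_of_min hp hminp q hq
  have h2 := ip_nonpos_of_min hq hminq p hp
  have h3 : ∑ i, (q i - p i) ^ 2 ≤ 0 := by
    have hid : ∑ i, (q i - p i) ^ 2
        = ∑ i, (y i - p i) * (q i - p i) + ∑ i, (y i - q i) * (p i - q i) := by
      rw [← Finset.sum_add_distrib]
      exact Finset.sum_congr rfl fun i _ => by ring
    linarith
  have h4 : ∑ i, (q i - p i) ^ 2 = 0 :=
    le_antisymm h3 (Finset.sum_nonneg fun i _ => sq_nonneg _)
  funext i
  have h5 := (Finset.sum_eq_zero_iff_of_nonneg (fun i _ => sq_nonneg (q i - p i))).mp h4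
    i (Finset.mem_univ i)
  have := sq_eq_zero_iff.mp h5
  linarith

lemma measurePreserving_comp_subtype {N ℓ : ℕ} (p : Fin N → Prop) [DecidablePred p]
    (e : Fin ℓ ≃ Subtype p) :
    MeasurePreserving (fun z : Fin N → ℝ => fun j : Fin ℓ => z (e j))
      (stdGaussian N) (stdGaussian ℓ) := by
  have h1 := measurePreserving_piEquivPiSubtypeProd
      (fun _ : Fin N => gaussianReal 0 1) p
  have h2 : MeasurePreserving (Prod.fst :
        ((∀ _ : Subtype p, ℝ) × (∀ _ : {i : Fin N // ¬ p i}, ℝ)) → (∀ _ : Subtype p, ℝ))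
      ((Measure.pi fun _ : Subtype p => gaussianReal 0 1).prod
        (Measure.pi fun _ : {i : Fin N // ¬ p i} => gaussianReal 0 1))
      (Measure.pi fun _ : Subtype p => gaussianReal 0 1) := by
    refine ⟨measurable_fst, ?_⟩
    rw [Measure.map_fst_prod]
    simp
  have h3 := MeasurePreserving.symm _
    (measurePreserving_piCongrLeft (fun _ : Subtype p => gaussianReal 0 1) e)
  have hcomp := h3.comp (h2.comp h1)
  have hfe : (fun z : Fin N → ℝ => fun j : Fin ℓ => z (e j))
      = (⇑(MeasurableEquiv.piCongrLeft (fun _ : Subtype p => ℝ) e).symm) ∘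
        (Prod.fst ∘ ⇑(MeasurableEquiv.piEquivPiSubtypeProd (fun _ : Fin N => ℝ) p)) := by
    funext z
    ext j
    simp [MeasurableEquiv.piCongrLeft, MeasurableEquiv.piEquivPiSubtypeProd,
      Equiv.piCongrLeft_symm_apply, Equiv.piEquivPiSubtypeProd]
  rw [_root_.stdGaussian, _root_.stdGaussian, hfe]
  exact hcomp

lemma lintegral_sq_gaussian : ∫⁻ x, ENNReal.ofReal (x ^ 2) ∂(gaussianReal 0 1) < ∞ := by
  rw [gaussianReal_of_var_ne_zero 0 one_ne_zero,
    lintegral_withDensity_eq_lintegral_mul _ (measurable_gaussianPDF 0 1)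
      (by fun_prop : Measurable fun x : ℝ => ENNReal.ofReal (x ^ 2))]
  have heq : ∀ x : ℝ, (gaussianPDF 0 1 x * ENNReal.ofReal (x ^ 2))
      = ENNReal.ofReal (gaussianPDFReal 0 1 x * x ^ 2) := by
    intro x
    rw [show gaussianPDF 0 1 x = ENNReal.ofReal (gaussianPDFReal 0 1 x) from rfl,
      ← ENNReal.ofReal_mul (gaussianPDFReal_nonneg 0 1 x)]
  rw [lintegral_congr fun x => (Pi.mul_apply _ _ x).trans (heq x)]
  have hInt : Integrable (fun x : ℝ => gaussianPDFReal 0 1 x * x ^ 2) := by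
    have h0 : Integrable (fun x : ℝ => x ^ (2:ℝ) * Real.exp (-(1/2) * x ^ 2)) := by
      have := integrable_rpow_mul_exp_neg_mul_sq (b := (1/2:ℝ))
        (show (0:ℝ) < 1/2 by norm_num) (s := (2:ℝ)) (show (-1:ℝ) < 2 by norm_num)
      exact this
    have h1 : Integrable (fun x : ℝ => (Real.sqrt (2 * Real.pi * (1:ℝ≥0)))⁻¹ *
        (x ^ (2:ℝ) * Real.exp (-(1/2) * x ^ 2))) := h0.const_mul _
    refine h1.congr (Filter.Eventually.of_forall fun x => ?_)
    have hx2 : x ^ (2:ℝ) = x ^ 2 := by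
      rw [show (2:ℝ) = ((2:ℕ):ℝ) by norm_num, Real.rpow_natCast]
    simp only [gaussianPDFReal]
    rw [hx2]
    have harg : -(x - 0) ^ 2 / (2 * ((1:ℝ≥0):ℝ)) = -(1/2) * x ^ 2 := by
      push_cast
      ring
    rw [harg]
    ring
  exact hInt.lintegral_lt_top

variable {N : ℕ}

/-- The fiber of `μ` over the value `v`, as a finset. -/
def fiber (μ : Fin N → ℝ) (v : ℝ) : Finset (Fin N) := Finset.univ.filter fun i => μ i = v

/-- Cardinality of the fiber. -/
def fdim (μ : Fin N → ℝ) (v : ℝ) : ℕ := (fiber μ v).card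

/-- Monotone enumeration of the fiber. -/
def fiso (μ : Fin N → ℝ) (v : ℝ) : Fin (fdim μ v) ≃o {x // x ∈ fiber μ v} :=
  (fiber μ v).orderIsoOfFin rfl

lemma mem_fiber_self (μ : Fin N → ℝ) (i : Fin N) : i ∈ fiber μ (μ i) := by
  simp [fiber]

lemma mu_fiso (μ : Fin N → ℝ) (v : ℝ) (j : Fin (fdim μ v)) : μ ((fiso μ v j : _) : Fin N) = v := by
  have h := (fiso μ v j).2
  simp only [fiber, Finset.mem_filter] at h
  exact h.2

/-- Blockwise projection: on each fiber of `μ`, apply `η` to the restriction of `z`. -/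
def blockProj (η : ∀ ℓ : ℕ, (Fin ℓ → ℝ) → (Fin ℓ → ℝ)) (μ : Fin N → ℝ)
    (z : Fin N → ℝ) (i : Fin N) : ℝ :=
  η (fdim μ (μ i)) (fun j => z ((fiso μ (μ i) j : _) : Fin N))
    ((fiso μ (μ i)).symm ⟨i, mem_fiber_self μ i⟩)

lemma blockProj_eq (η : ∀ ℓ : ℕ, (Fin ℓ → ℝ) → (Fin ℓ → ℝ)) (μ : Fin N → ℝ)
    (z : Fin N → ℝ) (v : ℝ) (i : Fin N) (hi : μ i = v) (j : Fin (fdim μ v))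
    (hj : ((fiso μ v j : _) : Fin N) = i) :
    blockProj η μ z i = η (fdim μ v) (fun j' => z ((fiso μ v j' : _) : Fin N)) j := by
  subst hi
  have h2 : (fiso μ (μ i)).symm ⟨i, mem_fiber_self μ i⟩ = j := by
    rw [show (⟨i, mem_fiber_self μ i⟩ : {x // x ∈ fiber μ (μ i)}) = fiso μ (μ i) j from
      Subtype.ext hj.symm, OrderIso.symm_apply_apply]
  rw [blockProj, h2]

lemma blockProj_fiso (η : ∀ ℓ : ℕ, (Fin ℓ → ℝ) → (Fin ℓ → ℝ)) (μ : Fin N → ℝ)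
    (z : Fin N → ℝ) (v : ℝ) (j : Fin (fdim μ v)) :
    blockProj η μ z ((fiso μ v j : _) : Fin N)
      = η (fdim μ v) (fun j' => z ((fiso μ v j' : _) : Fin N)) j :=
  blockProj_eq η μ z v _ (mu_fiso μ v j) j rfl

lemma sum_fiber (μ : Fin N → ℝ) (v : ℝ) (f : Fin N → ℝ) :
    ∑ i ∈ fiber μ v, f i = ∑ j, f ((fiso μ v j : _) : Fin N) := by
  rw [← Finset.sum_coe_sort (fiber μ v) f]
  exact (Fintype.sum_equiv (fiso μ v).toEquiv
    (fun j => f ((fiso μ v j : _) : Fin N)) (fun i => f ↑i) (fun j => rfl)).symm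

lemma sum_fiberwise (μ : Fin N → ℝ) (f : Fin N → ℝ) :
    ∑ v ∈ Finset.image μ Finset.univ, ∑ i ∈ fiber μ v, f i = ∑ i, f i :=
  Finset.sum_fiberwise_of_maps_to (fun i _ => Finset.mem_image_of_mem μ (Finset.mem_univ i)) f

end MonoRegAux

theorem monoReg_risk_at_infinity
    (η : ∀ ℓ : ℕ, (Fin ℓ → ℝ) → (Fin ℓ → ℝ))
    (hmeas : ∀ ℓ, Measurable (η ℓ))
    (hproj : ∀ (ℓ : ℕ) (y : Fin ℓ → ℝ), η ℓ y ∈ monoCone ℓ ∧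
      ∀ x ∈ monoCone ℓ, (∑ i, (y i - η ℓ y i) ^ 2) ≤ ∑ i, (y i - x i) ^ 2)
    (N : ℕ) (μ : Fin N → ℝ) (hμ : μ ∈ monoCone N) :
    Tendsto
      (fun t : ℝ =>
        ∫⁻ z, ENNReal.ofReal (∑ i, (η N (t • μ + z) i - (t • μ) i) ^ 2)
          ∂(stdGaussian N))
      atTop
      (nhds (∑ v ∈ Finset.image μ Finset.univ,
        riskAtZero η ((Finset.univ.filter fun i => μ i = v).card))) := by
  have hμm : Monotone μ := hμ
  set w : (Fin N → ℝ) → Fin N → ℝ := MonoRegAux.blockProj η μ with hwdef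
  -- monotonicity of the block projection within a fiber
  have hwmono : ∀ (z : Fin N → ℝ) (i j : Fin N), i ≤ j → μ i = μ j → w z i ≤ w z j := by
    intro z i j hij hv
    have himem : i ∈ MonoRegAux.fiber μ (μ i) := MonoRegAux.mem_fiber_self μ i
    have hjmem : j ∈ MonoRegAux.fiber μ (μ i) := by
      simp only [MonoRegAux.fiber, Finset.mem_filter]
      exact ⟨Finset.mem_univ j, hv.symm⟩
    set a := (MonoRegAux.fiso μ (μ i)).symm ⟨i, himem⟩ with ha
    set b := (MonoRegAux.fiso μ (μ i)).symm ⟨j, hjmem⟩ with hb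
    have hab : a ≤ b := (MonoRegAux.fiso μ (μ i)).symm.monotone (Subtype.mk_le_mk.mpr hij)
    rw [hwdef]
    have h1 : MonoRegAux.blockProj η μ z i
        = η _ (fun j' => z ((MonoRegAux.fiso μ (μ i) j' : _) : Fin N)) a := by
      refine MonoRegAux.blockProj_eq η μ z (μ i) i rfl a ?_
      rw [ha, OrderIso.apply_symm_apply]
    have h2 : MonoRegAux.blockProj η μ z j
        = η _ (fun j' => z ((MonoRegAux.fiso μ (μ i) j' : _) : Fin N)) b := by
      refine MonoRegAux.blockProj_eq η μ z (μ i) j hv.symm b ?_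
      rw [hb, OrderIso.apply_symm_apply]
    rw [h1, h2]
    exact (hproj _ _).1 hab
  -- inner-product characterization of the blockwise candidate
  have hwchar : ∀ (t : ℝ) (z x : Fin N → ℝ), x ∈ monoCone N →
      ∑ i, ((t • μ + z) i - (t * μ i + w z i)) * (x i - (t * μ i + w z i)) ≤ 0 := by
    intro t z x hx
    have hterm : ∀ i, ((t • μ + z) i - (t * μ i + w z i)) * (x i - (t * μ i + w z i))
        = (z i - w z i) * (x i - t * μ i - w z i) := by
      intro i
      simp only [Pi.add_apply, Pi.smul_apply, smul_eq_mul]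
      ring
    rw [Finset.sum_congr rfl fun i _ => hterm i,
      ← MonoRegAux.sum_fiberwise μ (fun i => (z i - w z i) * (x i - t * μ i - w z i))]
    refine Finset.sum_nonpos fun v hv => ?_
    rw [MonoRegAux.sum_fiber μ v (fun i => (z i - w z i) * (x i - t * μ i - w z i))]
    have hXvM : (fun j => x ((MonoRegAux.fiso μ v j : _) : Fin N) - t * v)
        ∈ monoCone (MonoRegAux.fdim μ v) := by
      intro a b hab
      have hcc : ((MonoRegAux.fiso μ v a : _) : Fin N) ≤ ((MonoRegAux.fiso μ v b : _) : Fin N) :=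
        Subtype.coe_le_coe.mpr ((MonoRegAux.fiso μ v).monotone hab)
      exact sub_le_sub_right (hx hcc) _
    have happ := MonoRegAux.ip_nonpos_of_min
      (hproj _ (fun j => z ((MonoRegAux.fiso μ v j : _) : Fin N))).1
      (hproj _ (fun j => z ((MonoRegAux.fiso μ v j : _) : Fin N))).2
      (fun j => x ((MonoRegAux.fiso μ v j : _) : Fin N) - t * v) hXvM
    refine le_trans ?_ happ
    apply le_of_eq
    refine Finset.sum_congr rfl fun j _ => ?_
    rw [hwdef, MonoRegAux.blockProj_fiso η μ z v j, MonoRegAux.mu_fiso μ v j]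
  -- identification of the projection when the candidate is monotone
  have hproj_eq : ∀ (t : ℝ) (z : Fin N → ℝ),
      (fun i => t * μ i + w z i) ∈ monoCone N →
      η N (t • μ + z) = fun i => t * μ i + w z i := by
    intro t z hM
    exact MonoRegAux.proj_unique (hproj N (t • μ + z)).1 hM (hproj N (t • μ + z)).2
      (MonoRegAux.min_of_ip_nonpos fun x hx => hwchar t z x hx)
  -- eventual monotonicity of the candidate
  have hevent : ∀ z : Fin N → ℝ, ∀ᶠ t in (atTop : Filter ℝ),
      (fun i => t * μ i + w z i) ∈ monoCone N := by
    intro z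
    have hall : ∀ᶠ t in (atTop : Filter ℝ),
        ∀ i j : Fin N, i ≤ j → t * μ i + w z i ≤ t * μ j + w z j := by
      rw [Filter.eventually_all]
      intro i
      rw [Filter.eventually_all]
      intro j
      by_cases hij : i ≤ j
      · by_cases hv : μ i = μ j
        · refine Filter.Eventually.of_forall fun t _ => ?_
          have := hwmono z i j hij hv
          rw [hv]
          linarith
        · have hlt : μ i < μ j := lt_of_le_of_ne (hμm hij) hv
          filter_upwards [Filter.eventually_ge_atTop ((w z i - w z j) / (μ j - μ i))]
            with t ht _
          have h2 : w z i - w z j ≤ t * (μ j - μ i) :=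
            (div_le_iff₀ (by linarith)).mp ht
          nlinarith
      · exact Filter.Eventually.of_forall fun t h => absurd h hij
    exact hall.mono fun t h a b hab => h a b hab
  -- the limit function and the bound
  set g : (Fin N → ℝ) → ℝ≥0∞ := fun z => ENNReal.ofReal (∑ i, (w z i) ^ 2) with hgdef
  set bound : (Fin N → ℝ) → ℝ≥0∞ := fun z => ENNReal.ofReal (4 * ∑ i, z i ^ 2) with hbdef
  have h_bound : ∀ᶠ t in (atTop : Filter ℝ), ∀ᵐ z ∂(stdGaussian N),
      ENNReal.ofReal (∑ i, (η N (t • μ + z) i - (t • μ) i) ^ 2) ≤ bound z := by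
    filter_upwards [Filter.eventually_ge_atTop (0:ℝ)] with t ht
    refine Filter.Eventually.of_forall fun z => ?_
    have hcone : (t • μ) ∈ monoCone N := by
      intro a b hab
      simp only [Pi.smul_apply, smul_eq_mul]
      exact mul_le_mul_of_nonneg_left (hμm hab) ht
    have h1 := (hproj N (t • μ + z)).2 (t • μ) hcone
    have h1' : ∑ i, ((t • μ + z) i - η N (t • μ + z) i) ^ 2 ≤ ∑ i, z i ^ 2 := by
      refine le_trans h1 (le_of_eq (Finset.sum_congr rfl fun i _ => ?_))
      simp only [Pi.add_apply]
      ring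
    have h2 : ∑ i, (η N (t • μ + z) i - (t • μ) i) ^ 2
        ≤ 2 * ∑ i, ((t • μ + z) i - η N (t • μ + z) i) ^ 2 + 2 * ∑ i, z i ^ 2 := by
      have h3 := MonoRegAux.sum_sq_add_le N (fun i => η N (t • μ + z) i - (t • μ + z) i) z
      refine le_trans (le_of_eq (Finset.sum_congr rfl fun i _ => ?_)) (le_trans h3 ?_)
      · simp only [Pi.add_apply, Pi.smul_apply, smul_eq_mul]
        ring
      · have h4 : ∑ i, (η N (t • μ + z) i - (t • μ + z) i) ^ 2
            = ∑ i, ((t • μ + z) i - η N (t • μ + z) i) ^ 2 :=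
          Finset.sum_congr rfl fun i _ => by ring
        rw [h4]
    rw [hbdef]
    refine ENNReal.ofReal_le_ofReal ?_
    linarith
  have h_fin : ∫⁻ z, bound z ∂(stdGaussian N) ≠ ∞ := by
    have hsplit : ∀ z : Fin N → ℝ, bound z = ∑ i, ENNReal.ofReal (4 * z i ^ 2) := by
      intro z
      rw [hbdef]
      dsimp only
      rw [Finset.mul_sum, ENNReal.ofReal_sum_of_nonneg fun i _ => by positivity]
    rw [lintegral_congr hsplit,
      lintegral_finset_sum _ fun i _ => by fun_prop]
    refine (ENNReal.sum_lt_top.mpr fun i _ => ?_).ne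
    have hmp := MonoRegAux.measurePreserving_comp_subtype (fun x : Fin N => x = i)
      (⟨fun _ => ⟨i, rfl⟩, fun _ => 0, fun j => Subsingleton.elim _ _,
        fun s => Subtype.ext s.2.symm⟩ : Fin 1 ≃ Subtype (fun x : Fin N => x = i))
    have hg1 : Measurable fun u : Fin 1 → ℝ => ENNReal.ofReal (4 * (u 0) ^ 2) := by fun_prop
    have hstep1 : ∫⁻ z, ENNReal.ofReal (4 * z i ^ 2) ∂(stdGaussian N)
        = ∫⁻ u : Fin 1 → ℝ, ENNReal.ofReal (4 * (u 0) ^ 2) ∂(stdGaussian 1) :=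
      hmp.lintegral_comp hg1
    have hg2 : Measurable fun x : ℝ => ENNReal.ofReal (4 * x ^ 2) := by fun_prop
    have hstep2 : ∫⁻ u : Fin 1 → ℝ, ENNReal.ofReal (4 * (u 0) ^ 2) ∂(stdGaussian 1)
        = ∫⁻ x : ℝ, ENNReal.ofReal (4 * x ^ 2) ∂(gaussianReal 0 1) :=
      (measurePreserving_funUnique (gaussianReal 0 1) (Fin 1)).lintegral_comp hg2
    rw [hstep1, hstep2]
    have : ∫⁻ x : ℝ, ENNReal.ofReal (4 * x ^ 2) ∂(gaussianReal 0 1)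
        = ENNReal.ofReal 4 * ∫⁻ x : ℝ, ENNReal.ofReal (x ^ 2) ∂(gaussianReal 0 1) := by
      rw [← lintegral_const_mul _ (by fun_prop : Measurable fun x : ℝ => ENNReal.ofReal (x ^ 2))]
      exact lintegral_congr fun x => by
        rw [← ENNReal.ofReal_mul (by norm_num : (0:ℝ) ≤ 4)]
    rw [this]
    exact ENNReal.mul_lt_top ENNReal.ofReal_lt_top MonoRegAux.lintegral_sq_gaussian
  have hF_meas : ∀ᶠ t in (atTop : Filter ℝ), Measurable fun z : Fin N → ℝ =>
      ENNReal.ofReal (∑ i, (η N (t • μ + z) i - (t • μ) i) ^ 2) := by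
    refine Filter.Eventually.of_forall fun t => ?_
    have hηm : Measurable fun z : Fin N → ℝ => η N (t • μ + z) :=
      (hmeas N).comp (measurable_id.const_add (t • μ))
    refine Measurable.ennreal_ofReal (Finset.measurable_sum _ fun i _ => ?_)
    exact (((measurable_pi_apply i).comp hηm).sub measurable_const).pow_const 2
  have h_lim : ∀ᵐ z ∂(stdGaussian N), Tendsto
      (fun t : ℝ => ENNReal.ofReal (∑ i, (η N (t • μ + z) i - (t • μ) i) ^ 2))
      atTop (nhds (g z)) := by
    refine Filter.Eventually.of_forall fun z => ?_
    have hev : (fun _ : ℝ => g z) =ᶠ[atTop]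
        fun t => ENNReal.ofReal (∑ i, (η N (t • μ + z) i - (t • μ) i) ^ 2) := by
      filter_upwards [hevent z] with t hM
      rw [hproj_eq t z hM, hgdef]
      dsimp only
      congr 1
      refine Finset.sum_congr rfl fun i _ => ?_
      simp only [Pi.smul_apply, smul_eq_mul]
      ring
    exact Filter.Tendsto.congr' hev tendsto_const_nhds
  have hval : ∫⁻ z, g z ∂(stdGaussian N)
      = ∑ v ∈ Finset.image μ Finset.univ,
          riskAtZero η ((Finset.univ.filter fun i => μ i = v).card) := by
    have hgsum : ∀ z : Fin N → ℝ, g z = ∑ v ∈ Finset.image μ Finset.univ,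
        ENNReal.ofReal (∑ j, (η (MonoRegAux.fdim μ v)
          (fun j' => z ((MonoRegAux.fiso μ v j' : _) : Fin N)) j) ^ 2) := by
      intro z
      rw [hgdef]
      dsimp only
      have h1 : ∑ i, (w z i) ^ 2 = ∑ v ∈ Finset.image μ Finset.univ,
          ∑ j, (η (MonoRegAux.fdim μ v)
            (fun j' => z ((MonoRegAux.fiso μ v j' : _) : Fin N)) j) ^ 2 := by
        rw [← MonoRegAux.sum_fiberwise μ (fun i => (w z i) ^ 2)]
        refine Finset.sum_congr rfl fun v _ => ?_
        rw [MonoRegAux.sum_fiber μ v (fun i => (w z i) ^ 2)]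
        refine Finset.sum_congr rfl fun j _ => ?_
        rw [hwdef, MonoRegAux.blockProj_fiso η μ z v j]
      rw [h1, ENNReal.ofReal_sum_of_nonneg
        fun v _ => Finset.sum_nonneg fun j _ => sq_nonneg _]
    rw [lintegral_congr hgsum, lintegral_finset_sum _ ?hmeasv]
    case hmeasv =>
      intro v _
      refine Measurable.ennreal_ofReal (Finset.measurable_sum _ fun j _ => ?_)
      refine Measurable.pow_const ?_ 2
      exact (measurable_pi_apply j).comp
        ((hmeas _).comp (measurable_pi_lambda _ fun j' => measurable_pi_apply _))
    refine Finset.sum_congr rfl fun v _ => ?_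
    have hmp := MonoRegAux.measurePreserving_comp_subtype
      (fun x : Fin N => x ∈ MonoRegAux.fiber μ v) (MonoRegAux.fiso μ v).toEquiv
    have hgm : Measurable fun u : Fin (MonoRegAux.fdim μ v) → ℝ =>
        ENNReal.ofReal (∑ j, (η (MonoRegAux.fdim μ v) u j) ^ 2) := by
      refine Measurable.ennreal_ofReal (Finset.measurable_sum _ fun j _ => ?_)
      exact ((measurable_pi_apply j).comp (hmeas _)).pow_const 2
    exact hmp.lintegral_comp hgm
  rw [← hval]
  exact tendsto_lintegral_filter_of_dominated_convergence bound hF_meas h_bound h_fin h_lim
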